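/- Let n be a positive integer. There exists a balanced Steinhaus triangle of side length n in Z/4Z if and only if C(n+1,2) ≡ 0 (mod 4). -/
import Mathlib

set_option maxRecDepth 1000000
set_option maxHeartbeats 1000000

/-- Next row of a Steinhaus triangle: pairwise sums of adjacent entries. -/
def nextRow {m : ℕ} (l : List (ZMod m)) : List (ZMod m) :=
  List.zipWith (· + ·) l l.tail

/-- The rows of the Steinhaus triangle generated by the first row `l`. -/
def triangleRows {m : ℕ} (l : List (ZMod m)) : List (List (ZMod m)) :=
  (List.range l.length).map (fun i => nextRow^[i] l)

/-- All entries of the Steinhaus triangle generated by `l`. -/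
def triangleEntries {m : ℕ} (l : List (ZMod m)) : List (ZMod m) :=
  (triangleRows l).flatten

/-- The Steinhaus triangle of `l` is balanced: all elements of `ZMod m`
occur with the same multiplicity among its entries. -/
def IsBalanced {m : ℕ} (l : List (ZMod m)) : Prop :=
  ∀ a b : ZMod m, (triangleEntries l).count a = (triangleEntries l).count b

namespace SteinAux

/-! ### Sequences represented by (first 12 values, 12-periodic pattern) -/

def ddf (f : ℕ → ZMod 4) : ℕ → ZMod 4 := fun j => f j + f (j + 1)

def stepAP (S : List (ZMod 4) × List (ZMod 4)) : List (ZMod 4) × List (ZMod 4) :=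
  (List.zipWith (· + ·) S.1 (S.1.tail ++ [S.2.getD 0 0]),
   List.zipWith (· + ·) S.2 (S.2.rotate 1))

def rep (S : List (ZMod 4) × List (ZMod 4)) : ℕ → ZMod 4 :=
  fun j => if j < 12 then S.1.getD j 0 else S.2.getD (j % 12) 0

def Ok (S : List (ZMod 4) × List (ZMod 4)) : Prop := S.1.length = 12 ∧ S.2.length = 12

lemma ok_step {S} (h : Ok S) : Ok (stepAP S) := by
  obtain ⟨h1, h2⟩ := h
  constructor
  · simp [stepAP, List.length_zipWith, h1, h2]
  · simp [stepAP, List.length_zipWith, h2]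

lemma ok_iter {S} (h : Ok S) (i : ℕ) : Ok (stepAP^[i] S) := by
  induction i with
  | zero => exact h
  | succ i ih => rw [Function.iterate_succ_apply']; exact ok_step ih

lemma rep_step {S} (h : Ok S) : ddf (rep S) = rep (stepAP S) := by
  obtain ⟨A, P⟩ := S
  obtain ⟨h1, h2⟩ := h
  simp only [Ok] at h1 h2
  funext j
  have hA0 : A.tail.length = 11 := by simp [h1]
  have hlen1 : (List.zipWith (· + ·) A (A.tail ++ [P.getD 0 0])).length = 12 := by
    simp [List.length_zipWith, h1, hA0]
  have hlen2 : (List.zipWith (· + ·) P (P.rotate 1)).length = 12 := by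
    simp [List.length_zipWith, h2]
  simp only [ddf, rep, stepAP]
  rcases lt_trichotomy j 11 with hj | hj | hj
  · rw [if_pos (by omega : j < 12), if_pos (by omega : j + 1 < 12), if_pos (by omega : j < 12)]
    rw [List.getD_eq_getElem (List.zipWith (· + ·) A (A.tail ++ [P.getD 0 0])) 0
      (by omega : j < (List.zipWith (· + ·) A (A.tail ++ [P.getD 0 0])).length)]
    rw [List.getElem_zipWith]
    rw [List.getElem_append_left (by omega : j < A.tail.length)]
    rw [List.getElem_tail]
    rw [List.getD_eq_getElem A 0 (by omega : j < A.length),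
        List.getD_eq_getElem A 0 (by omega : j + 1 < A.length)]
  · subst hj
    rw [if_pos (by omega : (11:ℕ) < 12), if_neg (by omega : ¬ (11 + 1 < 12)),
      if_pos (by omega : (11:ℕ) < 12)]
    rw [List.getD_eq_getElem (List.zipWith (· + ·) A (A.tail ++ [P.getD 0 0])) 0
      (by omega : 11 < (List.zipWith (· + ·) A (A.tail ++ [P.getD 0 0])).length)]
    rw [List.getElem_zipWith]
    rw [List.getElem_append_right (by omega : A.tail.length ≤ 11)]
    rw [List.getD_eq_getElem A 0 (by omega : 11 < A.length)]
    have : (11 : ℕ) + 1 = 12 := rfl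
    rw [this]
    norm_num [hA0]
  · have hm : j % 12 < 12 := Nat.mod_lt _ (by norm_num)
    have hm2 : (j + 1) % 12 < 12 := Nat.mod_lt _ (by norm_num)
    rw [if_neg (by omega : ¬ j < 12), if_neg (by omega : ¬ j + 1 < 12),
      if_neg (by omega : ¬ j < 12)]
    rw [List.getD_eq_getElem (List.zipWith (· + ·) P (P.rotate 1)) 0
      (by omega : j % 12 < (List.zipWith (· + ·) P (P.rotate 1)).length)]
    rw [List.getElem_zipWith]
    rw [List.getElem_rotate]
    rw [List.getD_eq_getElem P 0 (by omega : j % 12 < P.length),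
        List.getD_eq_getElem P 0 (by omega : (j + 1) % 12 < P.length)]
    congr 2
    rw [h2]
    omega

lemma rep_iter {S} (h : Ok S) (i : ℕ) : ddf^[i] (rep S) = rep (stepAP^[i] S) := by
  induction i with
  | zero => rfl
  | succ i ih =>
    rw [Function.iterate_succ_apply', Function.iterate_succ_apply', ih,
        rep_step (ok_iter h i)]

lemma rep_per (S : List (ZMod 4) × List (ZMod 4)) {j : ℕ} (h : 12 ≤ j) :
    rep S (j + 12) = rep S j := by
  simp only [rep, if_neg (by omega : ¬ j + 12 < 12), if_neg (by omega : ¬ j < 12),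
    Nat.add_mod_right]

/-! ### Triangle rows of prefixes of a sequence -/

lemma nextRow_map_range (f : ℕ → ZMod 4) (k : ℕ) :
    nextRow ((List.range (k+1)).map f) = (List.range k).map (ddf f) := by
  apply List.ext_getElem
  · simp [nextRow]
  · intro i h1 h2
    have hi : i < k := by simpa using h2
    simp only [nextRow, List.getElem_zipWith, List.getElem_tail, List.getElem_map,
      List.getElem_range, ddf]

lemma nextRow_nil : nextRow ([] : List (ZMod 4)) = [] := rfl

lemma iter_nextRow (i : ℕ) : ∀ (n : ℕ) (f : ℕ → ZMod 4),
    nextRow^[i] ((List.range n).map f) = (List.range (n - i)).map (ddf^[i] f) := by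
  induction i with
  | zero => intro n f; simp
  | succ i ih =>
    intro n f
    match n with
    | 0 =>
      simp only [List.range_zero, List.map_nil, Nat.zero_sub]
      rw [Function.iterate_succ_apply, nextRow_nil]
      have := ih 0 f
      simpa using this
    | Nat.succ n =>
      rw [Function.iterate_succ_apply, nextRow_map_range, ih n (ddf f)]
      have hnn : Nat.succ n - (i + 1) = n - i := by omega
      rw [hnn, Function.iterate_succ_apply]

lemma count_flatten' (a : ZMod 4) (L : List (List (ZMod 4))) :
    L.flatten.count a = (L.map (fun l => l.count a)).sum := by
  induction L with
  | nil => simp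
  | cons l L ih => simp [List.count_append, ih]

lemma listsum_finsum (f : ℕ → ℕ) (k : ℕ) :
    ((List.range k).map f).sum = ∑ i ∈ Finset.range k, f i := by
  induction k with
  | zero => simp
  | succ k ih =>
    rw [List.range_succ, Finset.sum_range_succ, List.map_append, List.sum_append, ih]
    simp

lemma count_tri (a : ZMod 4) (n : ℕ) (f : ℕ → ZMod 4) :
    (triangleEntries ((List.range n).map f)).count a
      = ∑ i ∈ Finset.range n, (((List.range (n - i)).map (ddf^[i] f)).count a) := by
  unfold triangleEntries triangleRows
  rw [count_flatten']
  rw [List.length_map, List.length_range, List.map_map, listsum_finsum]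
  apply Finset.sum_congr rfl
  intro i _
  simp only [Function.comp_apply, iter_nextRow]

lemma sum_range_add' (f : ℕ → ℕ) (m : ℕ) : ∀ n : ℕ,
    ∑ i ∈ Finset.range (m + n), f i
      = (∑ i ∈ Finset.range m, f i) + ∑ i ∈ Finset.range n, f (m + i) := by
  intro n
  induction n with
  | zero => simp
  | succ n ih =>
    rw [show m + (n+1) = (m + n) + 1 by omega, Finset.sum_range_succ, ih,
      Finset.sum_range_succ]
    omega

/-! ### Window and row extension lemmas -/

lemma window_const (S : List (ZMod 4) × List (ZMod 4)) (a : ZMod 4) :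
    ∀ m, 12 ≤ m → ((List.range 24).map (fun j => rep S (m + j))).count a
      = ((List.range 24).map (fun j => rep S (12 + j))).count a := by
  intro m hm
  induction m, hm using Nat.le_induction with
  | base => rfl
  | succ m hm ih =>
    rw [← ih]
    have h1 : (List.range 24).map (fun j => rep S (m + j))
        = rep S m :: (List.range 23).map (fun j => rep S (m + 1 + j)) := by
      rw [show (24:ℕ) = 23 + 1 from rfl, List.range_succ_eq_map, List.map_cons, List.map_map]
      congr 1
    have h2 : (List.range 24).map (fun j => rep S (m + 1 + j))
        = (List.range 23).map (fun j => rep S (m + 1 + j)) ++ [rep S m] := by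
      rw [show (24:ℕ) = 23 + 1 from rfl, List.range_succ, List.map_append]
      simp only [List.map_cons, List.map_nil]
      rw [show m + 1 + 23 = (m + 12) + 12 by omega, rep_per S (by omega), rep_per S (by omega)]
    rw [h1, h2, List.count_cons, List.count_append]
    simp [List.count_singleton]

lemma row_ext (S : List (ZMod 4) × List (ZMod 4)) (a : ZMod 4) (m : ℕ) (hm : 12 ≤ m) :
    ((List.range (m + 24)).map (rep S)).count a
      = ((List.range m).map (rep S)).count a
        + ((List.range 24).map (fun j => rep S (12 + j))).count a := by
  rw [List.range_add, List.map_append, List.count_append, List.map_map]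
  congr 1
  rw [← window_const S a m hm]
  rfl

/-! ### Trapezoid and block counts -/

def trapC (S : List (ZMod 4) × List (ZMod 4)) (n : ℕ) (a : ZMod 4) : ℕ :=
  ∑ i ∈ Finset.range 24, ((List.range (n + 24 - i)).map (rep (stepAP^[i] S))).count a

def blockC (S : List (ZMod 4) × List (ZMod 4)) (a : ZMod 4) : ℕ :=
  ∑ i ∈ Finset.range 24, ((List.range 24).map (fun j => rep (stepAP^[i] S) (12 + j))).count a

lemma tri_split {S} (hS : Ok S) (hfix : stepAP^[24] S = S) (n : ℕ) (a : ZMod 4) :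
    (triangleEntries ((List.range (n + 24)).map (rep S))).count a
      = trapC S n a + (triangleEntries ((List.range n).map (rep S))).count a := by
  have e1 : trapC S n a
      = ∑ i ∈ Finset.range 24, ((List.range (24 + n - i)).map (ddf^[i] (rep S))).count a := by
    unfold trapC
    apply Finset.sum_congr rfl
    intro i hi
    rw [rep_iter hS, show 24 + n - i = n + 24 - i by omega]
  have e2 : ∑ i ∈ Finset.range n,
        ((List.range (24 + n - (24 + i))).map (ddf^[24 + i] (rep S))).count a
      = ∑ i ∈ Finset.range n, ((List.range (n - i)).map (ddf^[i] (rep S))).count a := by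
    apply Finset.sum_congr rfl
    intro i hi
    rw [show 24 + n - (24 + i) = n - i by omega, show 24 + i = i + 24 by omega,
      Function.iterate_add_apply, rep_iter hS, hfix]
  rw [count_tri, count_tri, e1]
  rw [show n + 24 = 24 + n by omega, sum_range_add', e2]

lemma trap_step {S} (hS : Ok S) (n : ℕ) (hn : 12 ≤ n) (a : ZMod 4) :
    trapC S (n + 24) a = trapC S n a + blockC S a := by
  unfold trapC blockC
  rw [← Finset.sum_add_distrib]
  apply Finset.sum_congr rfl
  intro i hi
  simp only [Finset.mem_range] at hi
  rw [show n + 24 + 24 - i = (n + 24 - i) + 24 by omega]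
  exact row_ext _ a _ (by omega)

/-! ### The main induction -/

lemma main {S} (hS : Ok S) (hfix : stepAP^[24] S = S)
    (hB : ∀ a b : ZMod 4, blockC S a = blockC S b) (n0 : ℕ) (h0 : 12 ≤ n0)
    (hC : ∀ a b : ZMod 4,
      (triangleEntries ((List.range n0).map (rep S))).count a
        = (triangleEntries ((List.range n0).map (rep S))).count b)
    (hT : ∀ a b : ZMod 4, trapC S n0 a = trapC S n0 b) :
    ∀ t, ∀ a b : ZMod 4,
      (triangleEntries ((List.range (n0 + 24 * t)).map (rep S))).count a
        = (triangleEntries ((List.range (n0 + 24 * t)).map (rep S))).count b := by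
  have key : ∀ t,
      (∀ a b : ZMod 4,
        (triangleEntries ((List.range (n0 + 24 * t)).map (rep S))).count a
          = (triangleEntries ((List.range (n0 + 24 * t)).map (rep S))).count b)
      ∧ (∀ a b : ZMod 4, trapC S (n0 + 24 * t) a = trapC S (n0 + 24 * t) b) := by
    intro t
    induction t with
    | zero => exact ⟨by simpa using hC, by simpa using hT⟩
    | succ t ih =>
      have hn : n0 + 24 * (t + 1) = (n0 + 24 * t) + 24 := by ring
      constructor
      · intro a b
        rw [hn, tri_split hS hfix, tri_split hS hfix, ih.2 a b, ih.1 a b]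
      · intro a b
        rw [hn, trap_step hS _ (by omega), trap_step hS _ (by omega), ih.2 a b, hB a b]
  exact fun t => (key t).1

/-! ### The six explicit seeds -/

def S7 : List (ZMod 4) × List (ZMod 4) :=
  ([2, 3, 2, 3, 2, 3, 1, 1, 1, 0, 2, 2], [0, 0, 1, 3, 1, 2, 1, 3, 3, 2, 2, 2])
def S8 : List (ZMod 4) × List (ZMod 4) :=
  ([2, 3, 2, 1, 1, 0, 3, 2, 0, 1, 0, 3], [0, 0, 0, 1, 2, 1, 2, 0, 2, 3, 2, 3])
def S15 : List (ZMod 4) × List (ZMod 4) :=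
  ([1, 2, 0, 2, 3, 3, 0, 1, 3, 3, 2, 2], [0, 0, 0, 1, 1, 1, 2, 1, 3, 3, 2, 2])
def S16 : List (ZMod 4) × List (ZMod 4) :=
  ([1, 2, 3, 0, 3, 1, 1, 3, 0, 3, 3, 3], [0, 0, 0, 0, 2, 1, 1, 1, 2, 3, 3, 3])
def S23 : List (ZMod 4) × List (ZMod 4) :=
  ([0, 1, 2, 3, 1, 3, 2, 1, 3, 3, 2, 3], [0, 0, 1, 0, 1, 1, 3, 1, 3, 3, 0, 3])
def S24 : List (ZMod 4) × List (ZMod 4) :=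
  ([3, 2, 1, 2, 2, 2, 0, 1, 1, 2, 2, 1], [0, 0, 0, 0, 1, 2, 2, 3, 3, 2, 2, 1])

lemma bal_progression {S} (hok : Ok S) (hfix : stepAP^[24] S = S)
    (hB : ∀ a b : ZMod 4, blockC S a = blockC S b) (n0 : ℕ) (h0 : 12 ≤ n0)
    (hC : ∀ a b : ZMod 4,
      (triangleEntries ((List.range n0).map (rep S))).count a
        = (triangleEntries ((List.range n0).map (rep S))).count b)
    (hT : ∀ a b : ZMod 4, trapC S n0 a = trapC S n0 b)
    (n : ℕ) (hmod : ∃ t, n = n0 + 24 * t) :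
    ∃ l : List (ZMod 4), l.length = n ∧ IsBalanced l := by
  obtain ⟨t, rfl⟩ := hmod
  exact ⟨(List.range (n0 + 24 * t)).map (rep S), by simp,
    fun a b => main hok hfix hB n0 h0 hC hT t a b⟩

/-! ### Counting: forward direction -/

lemma len_nextRow (l : List (ZMod 4)) : (nextRow l).length = l.length - 1 := by
  unfold nextRow
  rw [List.length_zipWith, List.length_tail]
  omega

lemma len_iter_nextRow (l : List (ZMod 4)) : ∀ i, (nextRow^[i] l).length = l.length - i := by
  intro i
  induction i with
  | zero => simp
  | succ i ih =>
    rw [Function.iterate_succ_apply', len_nextRow, ih]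
    omega

lemma gauss : ∀ n : ℕ, (∑ i ∈ Finset.range n, (n - i)) = (n + 1).choose 2 := by
  intro n
  induction n with
  | zero => rfl
  | succ n ih =>
    rw [Finset.sum_range_succ]
    have h1 : ∑ i ∈ Finset.range n, (n + 1 - i) = (∑ i ∈ Finset.range n, ((n - i) + 1)) := by
      apply Finset.sum_congr rfl
      intro i hi
      simp only [Finset.mem_range] at hi
      omega
    rw [h1, Finset.sum_add_distrib, ih, Finset.sum_const, Finset.card_range, smul_eq_mul,
      mul_one]
    have h2 : (n + 1 + 1).choose 2 = (n + 1).choose 1 + (n + 1).choose 2 :=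
      Nat.choose_succ_succ (n + 1) 1
    rw [h2, Nat.choose_one_right]
    omega

lemma len_tri (l : List (ZMod 4)) :
    (triangleEntries l).length = (l.length + 1).choose 2 := by
  unfold triangleEntries triangleRows
  rw [List.length_flatten, List.map_map, listsum_finsum, ← gauss]
  apply Finset.sum_congr rfl
  intro i _
  simp [Function.comp_apply, len_iter_nextRow]

lemma count_partition (l : List (ZMod 4)) :
    l.count 0 + l.count 1 + l.count 2 + l.count 3 = l.length := by
  induction l with
  | nil => simp
  | cons a t ih =>
    simp only [List.count_cons, List.length_cons]
    fin_cases a <;> simp (config := { decide := true }) <;> omega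

lemma forward {n : ℕ} {l : List (ZMod 4)} (hl : l.length = n) (hb : IsBalanced l) :
    (n + 1).choose 2 % 4 = 0 := by
  have hpart := count_partition (triangleEntries l)
  have hlen := len_tri l
  rw [hl] at hlen
  have h1 := hb 0 1
  have h2 := hb 0 2
  have h3 := hb 0 3
  omega

/-! ### Number theory -/

lemma nt (n : ℕ) : (n + 1).choose 2 % 4 = 0 ↔ (n % 8 = 0 ∨ n % 8 = 7) := by
  rw [Nat.choose_two_right]
  simp only [Nat.add_sub_cancel]
  obtain ⟨q, r, hr, rfl⟩ : ∃ q r, r < 8 ∧ n = 8 * q + r :=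
    ⟨n / 8, n % 8, Nat.mod_lt _ (by norm_num), by omega⟩
  have hexp : (8 * q + r + 1) * (8 * q + r)
      = 2 * (4 * (8 * q * q + 2 * q * r + q)) + (r + 1) * r := by
    ring
  rw [hexp, Nat.mul_add_div (by norm_num : 0 < 2)]
  interval_cases r <;> omega

end SteinAux

open SteinAux

theorem stmt0 (n : ℕ) (hn : 0 < n) :
    (∃ l : List (ZMod 4), l.length = n ∧ IsBalanced l) ↔ (n + 1).choose 2 % 4 = 0 := by
  constructor
  · rintro ⟨l, hl, hb⟩
    exact forward hl hb
  · intro h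
    have h8 := (nt n).mp h
    have hcases : n = 7 ∨ n = 8 ∨ (31 ≤ n ∧ ∃ t, n = 31 + 24 * t) ∨ (32 ≤ n ∧ ∃ t, n = 32 + 24 * t)
        ∨ (∃ t, n = 15 + 24 * t) ∨ (∃ t, n = 16 + 24 * t) ∨ (∃ t, n = 23 + 24 * t)
        ∨ (∃ t, n = 24 + 24 * t) := by
      have : n % 24 = 7 ∨ n % 24 = 8 ∨ n % 24 = 15 ∨ n % 24 = 16 ∨ n % 24 = 23 ∨ n % 24 = 0 := by
        omega
      rcases this with h' | h' | h' | h' | h' | h'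
      · rcases Nat.lt_or_ge n 31 with h'' | h''
        · left; omega
        · right; right; left; exact ⟨h'', ⟨(n - 31) / 24, by omega⟩⟩
      · rcases Nat.lt_or_ge n 32 with h'' | h''
        · right; left; omega
        · right; right; right; left; exact ⟨h'', ⟨(n - 32) / 24, by omega⟩⟩
      · right; right; right; right; left; exact ⟨(n - 15) / 24, by omega⟩
      · right; right; right; right; right; left; exact ⟨(n - 16) / 24, by omega⟩
      · right; right; right; right; right; right; left; exact ⟨(n - 23) / 24, by omega⟩
      · right; right; right; right; right; right; right; exact ⟨(n - 24) / 24, by omega⟩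
    rcases hcases with rfl | rfl | ⟨_, ht⟩ | ⟨_, ht⟩ | ht | ht | ht | ht
    · exact ⟨(List.range 7).map (rep S7), by simp,
        (by decide : ∀ a b : ZMod 4,
          (triangleEntries ((List.range 7).map (rep S7))).count a
            = (triangleEntries ((List.range 7).map (rep S7))).count b)⟩
    · exact ⟨(List.range 8).map (rep S8), by simp,
        (by decide : ∀ a b : ZMod 4,
          (triangleEntries ((List.range 8).map (rep S8))).count a
            = (triangleEntries ((List.range 8).map (rep S8))).count b)⟩
    · exact bal_progression (S := S7) ⟨rfl, rfl⟩ (by decide) (by decide) 31 (by norm_num)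
        (by decide) (by decide) n ht
    · exact bal_progression (S := S8) ⟨rfl, rfl⟩ (by decide) (by decide) 32 (by norm_num)
        (by decide) (by decide) n ht
    · exact bal_progression (S := S15) ⟨rfl, rfl⟩ (by decide) (by decide) 15 (by norm_num)
        (by decide) (by decide) n ht
    · exact bal_progression (S := S16) ⟨rfl, rfl⟩ (by decide) (by decide) 16 (by norm_num)
        (by decide) (by decide) n ht
    · exact bal_progression (S := S23) ⟨rfl, rfl⟩ (by decide) (by decide) 23 (by norm_num)
        (by decide) (by decide) n ht
    · exact bal_progression (S := S24) ⟨rfl, rfl⟩ (by decide) (by decide) 24 (by norm_num)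
        (by decide) (by decide) n ht
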